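/- Let M ≥ 1, let q ∈ Δ_M have strictly positive entries, and let ρ > 0. Define g(μ,λ) = − Σ_{m=1}^M (1+λ) exp( (λ log q_m − μ)/(1+λ) − 1 ) − λρ − μ for λ ≥ 0 and μ ∈ ℝ. Then strong duality holds for the KL-constrained entropy minimization problem: min { Σ_{m=1}^M r_m log r_m : r ∈ Δ_M, Σ_{m=1}^M r_m log( r_m / q_m ) ≤ ρ } = sup_{λ ≥ 0, μ ∈ ℝ} g(μ,λ), where the minimand uses the convention 0·log 0 = 0 and the Kullback–Leibler constraint uses the convention 0·log(0/q_m) = 0. -/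

import Mathlib

open Real

lemma aux_xlogx (r a : ℝ) (hr : 0 ≤ r) : -Real.exp (a - 1) ≤ r * Real.log r - a * r := by
  rcases eq_or_lt_of_le hr with h | h
  · simp only [← h, Real.log_zero, mul_zero, zero_mul, sub_zero, mul_zero]
    simp [(Real.exp_pos (a-1)).le]
  · have h1 : (a - 1 - Real.log r) + 1 ≤ Real.exp (a - 1 - Real.log r) := Real.add_one_le_exp _
    have h2 : Real.exp (a - 1 - Real.log r) = Real.exp (a - 1) / r := by
      rw [Real.exp_sub, Real.exp_log h]
    rw [h2] at h1
    have h3 := mul_le_mul_of_nonneg_left h1 h.le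
    rw [mul_div_cancel₀ _ h.ne'] at h3
    nlinarith

lemma weak_dual {M : ℕ} (q : Fin M → ℝ) (hqpos : ∀ m, 0 < q m)
    (ρ : ℝ) (r : Fin M → ℝ) (hr0 : ∀ m, 0 ≤ r m) (hr1 : ∑ m, r m = 1)
    (hKL : ∑ m, r m * Real.log (r m / q m) ≤ ρ) (lam μ : ℝ) (hlam : 0 ≤ lam) :
    -(∑ m, (1 + lam) * Real.exp ((lam * Real.log (q m) - μ) / (1 + lam) - 1)) - lam * ρ - μ
      ≤ ∑ m, r m * Real.log (r m) := by
  have h1l : (0:ℝ) < 1 + lam := by linarith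
  have key : ∀ m ∈ (Finset.univ : Finset (Fin M)),
      -((1 + lam) * Real.exp ((lam * Real.log (q m) - μ) / (1 + lam) - 1)) ≤
      (1 + lam) * (r m * Real.log (r m)) - (lam * Real.log (q m) - μ) * r m := by
    intro m _
    set a : ℝ := (lam * Real.log (q m) - μ) / (1 + lam) with ha_def
    have hx := aux_xlogx (r m) a (hr0 m)
    have h2 := mul_le_mul_of_nonneg_left hx h1l.le
    have ha : (1 + lam) * a = lam * Real.log (q m) - μ := by
      rw [ha_def]; field_simp
    have ha' : (1 + lam) * (a * r m) = (lam * Real.log (q m) - μ) * r m := by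
      rw [← mul_assoc, ha]
    nlinarith [h2, ha']
  have hsum := Finset.sum_le_sum key
  rw [Finset.sum_neg_distrib] at hsum
  have expand : ∑ m, ((1 + lam) * (r m * Real.log (r m)) - (lam * Real.log (q m) - μ) * r m)
      = (1 + lam) * (∑ m, r m * Real.log (r m)) - lam * (∑ m, r m * Real.log (q m))
        + μ * (∑ m, r m) := by
    rw [Finset.mul_sum, Finset.mul_sum, Finset.mul_sum, ← Finset.sum_sub_distrib,
      ← Finset.sum_add_distrib]
    exact Finset.sum_congr rfl (fun m _ => by ring)
  rw [expand, hr1, mul_one] at hsum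
  have hsplit : ∑ m, r m * Real.log (r m / q m)
      = ∑ m, r m * Real.log (r m) - ∑ m, r m * Real.log (q m) := by
    rw [← Finset.sum_sub_distrib]
    refine Finset.sum_congr rfl (fun m _ => ?_)
    rcases eq_or_lt_of_le (hr0 m) with h | h
    · simp [← h]
    · rw [Real.log_div h.ne' (hqpos m).ne']; ring
  rw [hsplit] at hKL
  have hmul := mul_le_mul_of_nonneg_left hKL hlam
  nlinarith [hsum, hmul]

theorem kl_constrained_entropy_strong_duality
    {M : ℕ} (hM : 0 < M) (q : Fin M → ℝ) (hq : q ∈ stdSimplex ℝ (Fin M))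
    (hqpos : ∀ m, 0 < q m) (ρ : ℝ) (hρ : 0 < ρ)
    (g : ℝ → ℝ → ℝ)
    (hg : g = fun μ lam =>
      -(∑ m, (1 + lam) * Real.exp ((lam * Real.log (q m) - μ) / (1 + lam) - 1)) -
        lam * ρ - μ) :
    sInf { x | ∃ r ∈ stdSimplex ℝ (Fin M),
        (∑ m, r m * Real.log (r m / q m) ≤ ρ) ∧
        x = ∑ m, r m * Real.log (r m) } =
      sSup { y | ∃ lam : ℝ, 0 ≤ lam ∧ ∃ μ : ℝ, y = g μ lam } := by
  haveI : Nonempty (Fin M) := Fin.pos_iff_nonempty.mp hM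
  obtain ⟨hq0, hq1⟩ := hq
  set P := { x | ∃ r ∈ stdSimplex ℝ (Fin M),
        (∑ m, r m * Real.log (r m / q m) ≤ ρ) ∧
        x = ∑ m, r m * Real.log (r m) } with hP
  set D := { y | ∃ lam : ℝ, 0 ≤ lam ∧ ∃ μ : ℝ, y = g μ lam } with hD
  -- weak duality between elements
  have hPD : ∀ x ∈ P, ∀ y ∈ D, y ≤ x := by
    rintro x ⟨r, ⟨hr0, hr1⟩, hrKL, rfl⟩ y ⟨lam, hlam, μ, rfl⟩
    rw [hg]
    exact weak_dual q hqpos ρ r hr0 hr1 hrKL lam μ hlam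
  -- P nonempty (r = q)
  have hqKL : ∑ m, q m * Real.log (q m / q m) ≤ ρ := by
    have : ∀ m ∈ (Finset.univ : Finset (Fin M)),
        q m * Real.log (q m / q m) = 0 := by
      intro m _; rw [div_self (hqpos m).ne', Real.log_one, mul_zero]
    rw [Finset.sum_congr rfl this, Finset.sum_const, smul_zero]
    exact hρ.le
  have hPx : (∑ m, q m * Real.log (q m)) ∈ P := ⟨q, ⟨fun m => (hqpos m).le, hq1⟩, hqKL, rfl⟩
  have hPne : P.Nonempty := ⟨_, hPx⟩
  have hDx : g 0 0 ∈ D := ⟨0, le_refl 0, 0, rfl⟩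
  have hDne : D.Nonempty := ⟨_, hDx⟩
  have hDbdd : BddAbove D := ⟨_, fun y hy => hPD _ hPx y hy⟩
  have hPbdd : BddBelow P := ⟨g 0 0, fun x hx => hPD x hx _ hDx⟩
  -- tilted family
  have hZpos : ∀ β : ℝ, 0 < ∑ m, Real.exp (β * Real.log (q m)) :=
    fun β => Finset.sum_pos (fun m _ => Real.exp_pos _) Finset.univ_nonempty
  set Z : ℝ → ℝ := fun β => ∑ m, Real.exp (β * Real.log (q m)) with hZ
  set R : ℝ → Fin M → ℝ := fun β m => Real.exp (β * Real.log (q m)) / Z β with hR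
  have hRpos : ∀ β m, 0 < R β m := fun β m => div_pos (Real.exp_pos _) (hZpos β)
  have hRsum : ∀ β, ∑ m, R β m = 1 := by
    intro β; rw [hR]; simp only; rw [← Finset.sum_div, div_self (hZpos β).ne']
  have hlogR : ∀ β m, Real.log (R β m) = β * Real.log (q m) - Real.log (Z β) := by
    intro β m
    rw [hR]; simp only
    rw [Real.log_div (Real.exp_ne_zero _) (hZpos β).ne', Real.log_exp]
  set T : ℝ → ℝ := fun β => ∑ m, R β m * Real.log (q m) with hT
  have hE : ∀ β, ∑ m, R β m * Real.log (R β m) = β * T β - Real.log (Z β) := by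
    intro β
    have : ∑ m, R β m * Real.log (R β m)
        = ∑ m, (β * (R β m * Real.log (q m)) - Real.log (Z β) * R β m) := by
      refine Finset.sum_congr rfl (fun m _ => ?_)
      rw [hlogR]; ring
    rw [this, Finset.sum_sub_distrib, ← Finset.mul_sum, ← Finset.mul_sum, hRsum, mul_one, hT]
  have hF : ∀ β, ∑ m, R β m * Real.log (R β m / q m) = (β - 1) * T β - Real.log (Z β) := by
    intro β
    have : ∑ m, R β m * Real.log (R β m / q m)
        = ∑ m, ((β - 1) * (R β m * Real.log (q m)) - Real.log (Z β) * R β m) := by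
      refine Finset.sum_congr rfl (fun m _ => ?_)
      rw [Real.log_div (hRpos β m).ne' (hqpos m).ne', hlogR]; ring
    rw [this, Finset.sum_sub_distrib, ← Finset.mul_sum, ← Finset.mul_sum, hRsum, mul_one, hT]
  set F : ℝ → ℝ := fun β => (β - 1) * T β - Real.log (Z β) with hFdef
  have hZ1 : Z 1 = 1 := by
    rw [hZ]; simp only [one_mul]
    rw [show ∑ m, Real.exp (Real.log (q m)) = ∑ m, q m from
      Finset.sum_congr rfl (fun m _ => Real.exp_log (hqpos m)), hq1]
  have hF1 : F 1 = 0 := by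
    rw [hFdef]; simp [hZ1]
  have hFcont : Continuous F := by
    have hZc : Continuous Z := by
      rw [hZ]; exact continuous_finset_sum _ (fun m _ =>
        (continuous_id.mul continuous_const).rexp)
    have hTc : Continuous T := by
      rw [hT, hR]
      refine continuous_finset_sum _ (fun m _ => ?_)
      exact (((continuous_id.mul continuous_const).rexp.div hZc
        (fun β => (hZpos β).ne')).mul continuous_const)
    rw [hFdef]
    exact (((continuous_id.sub continuous_const).mul hTc).sub
      (hZc.log (fun β => (hZpos β).ne')))
  -- core construction: any β ∈ [0,1) with F β ≤ ρ and complementary slackness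
  have core : ∀ β : ℝ, 0 ≤ β → β < 1 → F β ≤ ρ → (β / (1 - β)) * (F β - ρ) = 0 →
      sInf P ≤ sSup D := by
    intro β hβ0 hβ1 hfeas hcs
    have h1β : 0 < 1 - β := by linarith
    set lam := β / (1 - β) with hlamdef
    have hlam0 : 0 ≤ lam := div_nonneg hβ0 h1β.le
    have h1l : (0:ℝ) < 1 + lam := by linarith
    have hβlam : lam = (1 + lam) * β := by
      rw [hlamdef]; field_simp; ring
    set μ := (1 + lam) * (Real.log (Z β) - 1) with hμdef
    -- value of g at (μ, lam)
    have hexp : ∀ m, (lam * Real.log (q m) - μ) / (1 + lam) - 1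
        = β * Real.log (q m) - Real.log (Z β) := by
      intro m
      rw [hμdef, div_sub_one h1l.ne', div_eq_iff h1l.ne']
      linear_combination (Real.log (q m)) * hβlam
    have hgsum : ∑ m, (1 + lam) * Real.exp ((lam * Real.log (q m) - μ) / (1 + lam) - 1)
        = 1 + lam := by
      have : ∀ m ∈ (Finset.univ : Finset (Fin M)),
          (1 + lam) * Real.exp ((lam * Real.log (q m) - μ) / (1 + lam) - 1)
          = (1 + lam) * R β m := by
        intro m _
        rw [hexp m, Real.exp_sub, Real.exp_log (hZpos β), hR]
      rw [Finset.sum_congr rfl this, ← Finset.mul_sum, hRsum, mul_one]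
    have hgval : g μ lam = ∑ m, R β m * Real.log (R β m) := by
      rw [hg]; simp only
      rw [hgsum, hE β]
      have hFval : (β - 1) * T β - Real.log (Z β) = F β := by rw [hFdef]
      rw [hμdef]
      linear_combination hcs + lam * hFval + (T β) * hβlam
    -- membership
    have hEP : (∑ m, R β m * Real.log (R β m)) ∈ P := by
      refine ⟨R β, ⟨fun m => (hRpos β m).le, hRsum β⟩, ?_, rfl⟩
      rw [hF β]; exact hfeas
    have hED : g μ lam ∈ D := ⟨lam, hlam0, μ, rfl⟩
    calc sInf P ≤ ∑ m, R β m * Real.log (R β m) := csInf_le hPbdd hEP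
      _ = g μ lam := hgval.symm
      _ ≤ sSup D := le_csSup hDbdd hED
  refine le_antisymm ?_ (csSup_le hDne (fun y hy => le_csInf hPne (fun x hx => hPD x hx y hy)))
  by_cases h0 : F 0 ≤ ρ
  · exact core 0 le_rfl one_pos h0 (by simp)
  · push_neg at h0
    have hsub := intermediate_value_Icc' (by norm_num : (0:ℝ) ≤ 1) hFcont.continuousOn
    have hρmem : ρ ∈ Set.Icc (F 1) (F 0) := ⟨by rw [hF1]; exact hρ.le, h0.le⟩
    obtain ⟨β, hβmem, hFβ⟩ := hsub hρmem
    have hβ1 : β < 1 := by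
      rcases lt_or_eq_of_le hβmem.2 with h | h
      · exact h
      · exfalso; rw [h, hF1] at hFβ; exact hρ.ne hFβ
    exact core β hβmem.1 hβ1 hFβ.le (by rw [hFβ]; ring)
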